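/- Let k, r, a, b, m, n be integers with k ≥ 1, 0 ≤ a ≤ m, n ≥ km − r, and max{0, ka − r} ≤ b ≤ n. Then the number of monotone lattice paths from (a,b) to (m,n) staying weakly above the line y = kx − r equals the alternating sum over i from 0 to ⌊(b+r−ka)/(k+1)⌋ of (−1)^i · ((n+r+1−km)/(n+r+1−k(a+i))) · C(m+n+r−(k+1)(a+i), m−a−i) · C(b+r−k(a+i), i). -/

import Mathlib

open Finset

/-- A monotone lattice path from `s` to `t` using unit steps `(1,0)` and `(0,1)`. -/
def MonoPath (s t : ℤ × ℤ) (P : List (ℤ × ℤ)) : Prop :=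
  P.head? = some s ∧ P.getLast? = some t ∧
  P.Chain' (fun p q => q = (p.1 + 1, p.2) ∨ q = (p.1, p.2 + 1))

/-- Integer binomial coefficient, `0` for negative lower index. -/
def IC (x j : ℤ) : ℕ := if j < 0 then 0 else x.toNat.choose j.toNat

/-- Number of monotone lattice paths from `(a,b)` to `(m,n)` staying weakly above `y = kx - r`. -/
noncomputable def NW (k r a b m n : ℤ) : ℕ :=
  Set.ncard {P : List (ℤ × ℤ) | MonoPath (a, b) (m, n) P ∧ ∀ p ∈ P, k * p.1 - r ≤ p.2}

/-- Number of monotone lattice paths from `(a,b)` to `(m,n)` staying strictly above `y = kx - r`. -/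
noncomputable def NS (k r a b m n : ℤ) : ℕ :=
  Set.ncard {P : List (ℤ × ℤ) | MonoPath (a, b) (m, n) P ∧ ∀ p ∈ P, k * p.1 - r < p.2}


lemma IC_neg {x j : ℤ} (h : j < 0) : IC x j = 0 := by simp [IC, h]

lemma IC_zero (x : ℤ) : IC x 0 = 1 := by simp [IC]

lemma IC_eq_zero_of_lt {x j : ℤ} (h : x < j) (hj : 1 ≤ j) : IC x j = 0 := by
  rw [IC, if_neg (by omega)]
  exact Nat.choose_eq_zero_of_lt (by omega)

lemma IC_pascal {x j : ℤ} (h : 0 ≤ x ∨ j ≠ 1) : IC (x + 1) j = IC x j + IC x (j - 1) := by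
  rcases lt_or_ge j 0 with hj | hj
  · rw [IC_neg hj, IC_neg hj, IC_neg (by omega)]
  rcases eq_or_lt_of_le hj with hj0 | hj1
  · subst hj0; rw [IC_zero, IC_zero, IC_neg (show (0:ℤ) - 1 < 0 by omega)]
  rcases le_or_gt 0 x with hx | hx
  · have hx1 : (x + 1).toNat = x.toNat + 1 := by omega
    have hjt : j.toNat = (j - 1).toNat + 1 := by omega
    rw [IC, if_neg (by omega), IC, if_neg (by omega), IC, if_neg (by omega), hx1, hjt,
      Nat.choose_succ_succ']
    ring
  · have hj2 : 2 ≤ j := by rcases h with h | h <;> omega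
    rw [IC_eq_zero_of_lt (by omega) (by omega), IC_eq_zero_of_lt (by omega) (by omega),
      IC_eq_zero_of_lt (by omega) (by omega)]

/-- ratio identity: `M * C(d+M-1, M) = d * C(d+M-1, M-1)` for `1 ≤ M`, `1 ≤ d`. -/
lemma IC_ratio {d M : ℤ} (hM : 1 ≤ M) (hd : 1 ≤ d) :
    M * IC (d + M - 1) M = d * IC (d + M - 1) (M - 1) := by
  have hs : (d + M - 1).toNat = (M - 1).toNat + d.toNat := by omega
  have hMt : M.toNat = (M - 1).toNat + 1 := by omega
  have := Nat.choose_succ_right_eq (d + M - 1).toNat (M - 1).toNat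
  rw [IC, if_neg (by omega), IC, if_neg (by omega), hMt]
  have hsub : (d + M - 1).toNat - (M - 1).toNat = d.toNat := by omega
  rw [hsub] at this
  have hcast := congrArg (Nat.cast : ℕ → ℤ) this
  push_cast at hcast ⊢
  have h1 : ((M - 1).toNat : ℤ) = M - 1 := by omega
  have h2 : (d.toNat : ℤ) = d := by omega
  rw [h1, h2] at hcast
  nlinarith [hcast]

/-- `T k M d i` : integer coefficient. -/
def Tc (k : ℤ) (M : ℕ) (d : ℤ) (i : ℕ) : ℤ :=
  (IC (d + M - 1 - (k + 1) * i) ((M : ℤ) - i) : ℤ)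
    - k * (IC (d + M - 1 - (k + 1) * i) ((M : ℤ) - i - 1) : ℤ)

def Sc (k : ℤ) (M : ℕ) (d e : ℤ) (N : ℕ) : ℤ :=
  ∑ i ∈ range N, (-1 : ℤ) ^ i * Tc k M d i * (IC (e - k * i) i : ℤ)

lemma Tc_zero_of_gt {k : ℤ} {M : ℕ} {d : ℤ} {i : ℕ} (h : M < i) : Tc k M d i = 0 := by
  rw [Tc, IC_neg (by push_cast; omega), IC_neg (by push_cast; omega)]
  ring

lemma Tc_M {k : ℤ} {M : ℕ} {d : ℤ} : Tc k M d M = 1 := by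
  rw [Tc]
  rw [show ((M:ℤ) - M) = 0 by ring, IC_zero, IC_neg (by omega)]
  ring

lemma IC_pascal2 {x j : ℤ} (k : ℤ) (h1 : 0 ≤ x ∨ j ≠ 1) (h2 : 0 ≤ x ∨ j ≠ 2) :
    (IC (x + 1) j : ℤ) - k * IC (x + 1) (j - 1)
      = ((IC x j : ℤ) - k * IC x (j - 1)) + ((IC x (j - 1) : ℤ) - k * IC x (j - 1 - 1)) := by
  rw [IC_pascal h1, IC_pascal (by rcases h2 with h | h; exacts [Or.inl h, Or.inr (by omega)])]
  push_cast; ring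

/-- termwise Pascal in `d`. -/
lemma Tc_rec_d {k : ℤ} (hk : 1 ≤ k) {M : ℕ} {d : ℤ} (hd : k * (M + 1) + 1 ≤ d) (i : ℕ) :
    Tc k (M + 1) d i = Tc k (M + 1) (d - 1) i + Tc k M d i := by
  have hX : (i : ℤ) ≤ M → 0 ≤ d + M - 1 - (k + 1) * i := by
    intro hi
    nlinarith [Int.natCast_nonneg i, Int.natCast_nonneg M]
  have key := IC_pascal2 (x := d + M - 1 - (k + 1) * i) (j := ((M : ℤ) + 1) - i) k
    (by rcases eq_or_ne (((M : ℤ) + 1) - i) 1 with he | he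
        · left; exact hX (by omega)
        · right; exact he)
    (by rcases eq_or_ne (((M : ℤ) + 1) - i) 2 with he | he
        · left; exact hX (by omega)
        · right; exact he)
  rw [Tc, Tc, Tc]
  push_cast
  rw [show (d + ((M:ℤ) + 1) - 1 - (k + 1) * i) = (d + (M:ℤ) - 1 - (k + 1) * i) + 1 by ring,
    show (d - 1 + ((M:ℤ) + 1) - 1 - (k + 1) * i) = (d + (M:ℤ) - 1 - (k + 1) * i) by ring,
    show ((M:ℤ) + 1 - i - 1) = (((M:ℤ) + 1) - i) - 1 by ring,
    show ((M:ℤ) - i) = (((M:ℤ) + 1) - i) - 1 by ring,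
    show (((M:ℤ) + 1) - i - 1 - 1) = (((M:ℤ) + 1) - i) - 1 - 1 by ring]
  rw [show ((M:ℤ) + 1 - i) = (((M:ℤ) + 1) - i) by ring] at key ⊢
  rw [key]

lemma Tc_shift {k : ℤ} {M : ℕ} {d : ℤ} (j : ℕ) : Tc k (M + 1) d (j + 1) = Tc k M (d - k) j := by
  rw [Tc, Tc]
  push_cast
  rw [show (d + ((M:ℤ) + 1) - 1 - (k + 1) * ((j:ℤ) + 1)) = (d - k + (M:ℤ) - 1 - (k+1) * j) by ring,
    show ((M:ℤ) + 1 - ((j:ℤ)+1)) = ((M:ℤ) - j) by ring]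

lemma Sc_ext {k : ℤ} (hk : 1 ≤ k) {M : ℕ} {d e : ℤ} {N₁ N₂ : ℕ} (h1 : 1 ≤ N₁) (h12 : N₁ ≤ N₂)
    (hTC : e < (k + 1) * N₁) : Sc k M d e N₁ = Sc k M d e N₂ := by
  rw [Sc, Sc]
  apply Finset.sum_subset (by simp [Finset.range_subset_range, h12])
  intro i _ hi
  simp only [Finset.mem_range, not_lt] at hi
  have : e - k * i < i := by nlinarith [show (N₁ : ℤ) ≤ (i:ℤ) by exact_mod_cast hi]
  rw [IC_eq_zero_of_lt this (by exact_mod_cast show 1 ≤ i by omega)]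
  ring

lemma Sc_M_zero {k : ℤ} {d e : ℤ} {N : ℕ} (hN : 1 ≤ N) : Sc k 0 d e N = 1 := by
  rw [Sc, show N = (N - 1) + 1 by omega, Finset.sum_range_succ']
  have hz : ∀ i ∈ range (N - 1),
      (-1:ℤ)^(i+1) * Tc k 0 d (i+1) * (IC (e - k * (i+1 : ℕ)) ((i+1 : ℕ) : ℤ) : ℤ) = 0 := by
    intro i _
    rw [Tc_zero_of_gt (by omega)]; ring
  rw [Finset.sum_congr rfl hz]
  simp [Tc_M (M := 0), IC_zero]

/-- SR1 : Pascal recursion in `e`, needs `k ≤ e`. -/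
lemma Sc_rec_e {k : ℤ} (hk : 1 ≤ k) {M : ℕ} {d e : ℤ} (he : k ≤ e) (N : ℕ) :
    Sc k (M + 1) d (e + 1) (N + 1) = Sc k (M + 1) d e (N + 1) - Sc k M (d - k) (e - k) N := by
  have key : ∀ i : ℕ, (-1:ℤ)^i * Tc k (M+1) d i * (IC (e + 1 - k * i) i : ℤ)
      = (-1:ℤ)^i * Tc k (M+1) d i * (IC (e - k * i) i : ℤ)
        + (-1:ℤ)^i * Tc k (M+1) d i * (IC (e - k * i) ((i:ℤ) - 1) : ℤ) := by
    intro i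
    have : IC (e - k * i + 1) i = IC (e - k * i) i + IC (e - k * i) ((i:ℤ) - 1) := by
      apply IC_pascal
      rcases eq_or_ne ((i:ℤ)) 1 with he1 | he1
      · left; rw [he1]; omega
      · right; exact he1
    rw [show (e + 1 - k * (i:ℤ)) = (e - k * i + 1) by ring, this]
    push_cast; ring
  rw [Sc, Sc, Finset.sum_congr rfl (fun i _ => key i), Finset.sum_add_distrib]
  have h2 : ∑ i ∈ range (N + 1), (-1:ℤ)^i * Tc k (M+1) d i * (IC (e - k * i) ((i:ℤ) - 1) : ℤ)
      = - Sc k M (d - k) (e - k) N := by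
    rw [Finset.sum_range_succ']
    have hz0 : (-1:ℤ)^0 * Tc k (M+1) d 0 * (IC (e - k * ((0:ℕ) : ℤ)) (((0:ℕ) : ℤ) - 1) : ℤ) = 0 := by
      rw [IC_neg (by norm_num)]; ring
    rw [hz0, add_zero, Sc, ← Finset.sum_neg_distrib]
    apply Finset.sum_congr rfl
    intro j _
    rw [Tc_shift]
    rw [show (((j:ℕ)+1 : ℕ) : ℤ) - 1 = (j:ℤ) by push_cast; ring]
    rw [show (e - k * (((j:ℕ)+1 : ℕ) : ℤ)) = (e - k - k * j) by push_cast; ring]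
    push_cast; ring
  rw [h2]; ring

lemma IC_one {x : ℤ} (hx : 0 ≤ x) : (IC x 1 : ℤ) = x := by
  rw [IC, if_neg (by omega)]
  simp [Nat.choose_one_right]
  omega

lemma Tc_eq_zero_on_line {k : ℤ} (hk : 1 ≤ k) {M : ℕ} {d : ℤ} {i : ℕ}
    (hd : d = k * M) (hi : i < M) : Tc k M d i = 0 := by
  set Mi : ℤ := (M : ℤ) - i with hMi
  have hMi1 : 1 ≤ Mi := by omega
  have hdi : 1 ≤ k * Mi := by nlinarith
  have htop : d + (M : ℤ) - 1 - (k + 1) * i = k * Mi + Mi - 1 := by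
    rw [hMi, hd]; ring
  have hrat := IC_ratio (d := k * Mi) hMi1 hdi
  rw [Tc, htop]
  have hkey : Mi * ((IC (k * Mi + Mi - 1) Mi : ℤ) - k * IC (k * Mi + Mi - 1) (Mi - 1)) = 0 := by
    rw [mul_sub, hrat]; ring
  have := mul_eq_zero.mp hkey
  rcases this with h | h
  · omega
  · rw [hMi] at h; exact h

lemma Sc_restrict {k : ℤ} {M : ℕ} {d e : ℤ} {N N' : ℕ} (hN : N' ≤ N)
    (hz : ∀ i, N' ≤ i → i < N → (-1:ℤ)^i * Tc k M d i * (IC (e - k * i) i : ℤ) = 0) :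
    Sc k M d e N = Sc k M d e N' := by
  rw [Sc, Sc]
  exact (Finset.sum_subset (by simp [Finset.range_subset_range, hN])
    (fun i _ hi => by
      simp only [Finset.mem_range, not_lt] at *
      exact hz i (by omega) (by omega))).symm

lemma Sc_rec_d {k : ℤ} (hk : 1 ≤ k) {M : ℕ} {d e : ℤ} (hd : k * (M + 1) + 1 ≤ d) (N : ℕ) :
    Sc k (M + 1) d e N = Sc k (M + 1) (d - 1) e N + Sc k M d e N := by
  rw [Sc, Sc, Sc, ← Finset.sum_add_distrib]
  exact Finset.sum_congr rfl fun i _ => by rw [Tc_rec_d hk hd i]; ring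

lemma Sc_vanish (k : ℤ) (hk : 1 ≤ k) :
    ∀ (M D E : ℕ) (d e : ℤ) (N : ℕ), 1 ≤ M → d = k * M + D → e = d + E →
      (E : ℤ) ≤ (M : ℤ) - 1 → e < (k + 1) * N → Sc k M d e N = 0 := by
  intro M
  induction M using Nat.strong_induction_on with
  | _ M ihM =>
  intro D
  induction D with
  | zero =>
    intro E d e N hM hd he hE _
    rw [Sc]
    apply Finset.sum_eq_zero
    intro i _
    rcases lt_trichotomy i M with hi | hi | hi
    · rw [Tc_eq_zero_on_line hk (by rw [hd]; push_cast; ring) hi]; ring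
    · subst hi
      have : e - k * i = (E : ℤ) := by omega
      rw [this, IC_eq_zero_of_lt (by exact_mod_cast by omega) (by exact_mod_cast hM)]
      ring
    · rw [Tc_zero_of_gt hi]; ring
  | succ D ihD =>
    intro E
    induction E with
    | zero =>
      intro d e N hM hd he hE hTC
      have hed : e = d := by omega
      have hd1 : k * (M : ℤ) + 1 ≤ d := by omega
      rcases Nat.lt_or_ge 1 M with hM2 | hM1
      · -- M ≥ 2 : Rec-d
        obtain ⟨MM, rfl⟩ : ∃ MM, M = MM + 1 := ⟨M - 1, by omega⟩
        rw [Sc_rec_d hk (by push_cast at hd ⊢; omega) N]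
        have h1 : Sc k (MM + 1) (d - 1) e N = 0 := by
          apply ihD 1 (d - 1) e N hM (by push_cast at hd ⊢; omega) (by omega)
            (by push_cast; omega) hTC
        have h2 : Sc k MM d e N = 0 := by
          have hMM : 1 ≤ MM := by omega
          have hD' : (0:ℤ) ≤ k + D + 1 := by omega
          have hd' : d = k * (MM : ℤ) + (k + (D:ℤ) + 1) := by
            push_cast at hd; linear_combination hd
          apply ihM MM (by omega) (k + (D:ℤ) + 1).toNat 0 d e N hMM ?_ (by omega)
            (by push_cast; omega) hTC
          rw [Int.toNat_of_nonneg (by omega)]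
          exact hd'
        rw [h1, h2]; ring
      · -- M = 1 base : direct computation
        have hM1' : M = 1 := by omega
        subst hM1'
        have hdk : k + 1 ≤ d := by push_cast at hd; omega
        have hN2 : 2 ≤ N := by
          rcases N with _ | _ | N
          · exfalso; norm_num at hTC; omega
          · exfalso; norm_num at hTC; omega
          · omega
        rw [Sc_restrict (show 2 ≤ N by omega)
          (fun i h2 _ => by rw [Tc_zero_of_gt (by omega)]; ring)]
        rw [Sc, Finset.sum_range_succ, Finset.sum_range_one]
        have t1 : Tc k 1 d 1 = 1 := Tc_M (M := 1)
        have t0 : Tc k 1 d 0 = d - k := by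
          simp only [Tc]
          norm_num
          rw [IC_zero, IC_one (by omega)]
          ring
        rw [t0, t1]
        norm_num
        rw [IC_zero, IC_one (by omega)]
        ring_nf
        omega
    | succ E ihE =>
      intro d e N hM hd he hE hTC
      have hM2 : 2 ≤ M := by push_cast at hE; omega
      obtain ⟨MM, rfl⟩ : ∃ MM, M = MM + 1 := ⟨M - 1, by omega⟩
      push_cast at hd he hE
      have hprod : k ≤ k * ((MM:ℤ) + 1) := by nlinarith [Int.natCast_nonneg MM]
      obtain ⟨NN, rfl⟩ : ∃ NN, N = NN + 1 := ⟨N - 1, by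
        rcases N with _ | N
        · exfalso; norm_num at hTC; omega
        · omega⟩
      have hrec := Sc_rec_e hk (k := k) (M := MM) (d := d) (e := e - 1)
        (by omega) NN
      rw [show e - 1 + 1 = e by ring] at hrec
      rw [hrec]
      have hmul : k * ((MM:ℤ) + 1) = k * (MM:ℤ) + k := by ring
      have hexp : (k + 1) * ((NN:ℤ) + 1) = (k + 1) * (NN:ℤ) + k + 1 := by ring
      have hTC' : e < (k + 1) * ((NN:ℤ) + 1) := by push_cast at hTC; omega
      have h1 : Sc k (MM + 1) d (e - 1) (NN + 1) = 0 :=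
        ihE d (e - 1) (NN + 1) hM (by push_cast; omega) (by push_cast; omega)
          (by push_cast; omega) (by push_cast; omega)
      have h2 : Sc k MM (d - k) (e - 1 - k) NN = 0 := by
        apply ihM MM (by omega) (D + 1) E (d - k) (e - 1 - k) NN (by omega)
          (by push_cast; omega) (by push_cast; omega)
          (by push_cast; omega) (by push_cast; omega)
      rw [h1, h2]
      ring

def PathSet (k r : ℤ) (s t : ℤ × ℤ) : Set (List (ℤ × ℤ)) :=
  {P | MonoPath s t P ∧ ∀ p ∈ P, k * p.1 - r ≤ p.2}

lemma mp_bounds : ∀ (P : List (ℤ × ℤ)) (s t : ℤ × ℤ), MonoPath s t P →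
    ∀ p ∈ P, (s.1 ≤ p.1 ∧ s.2 ≤ p.2) ∧ (p.1 ≤ t.1 ∧ p.2 ≤ t.2) := by
  intro P
  induction P with
  | nil => intro s t h p hp; simp at hp
  | cons q L ih =>
    intro s t h p hp
    obtain ⟨h1, h2, h3⟩ := h
    have hqs : q = s := by simpa using h1
    subst hqs
    cases L with
    | nil =>
      have hqt : q = t := by simpa using h2
      have : p = q := by simpa using hp
      subst this; subst hqt
      exact ⟨⟨le_refl _, le_refl _⟩, le_refl _, le_refl _⟩
    | cons q' L' =>
      simp only [List.Chain', List.isChain_cons_cons] at h3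
      have hmp : MonoPath q' t (q' :: L') :=
        ⟨by simp, by rw [← List.getLast?_cons_cons (a := q)]; exact h2, h3.2⟩
      have ihq := ih q' t hmp
      have hqq' : q.1 ≤ q'.1 ∧ q.2 ≤ q'.2 := by
        rcases h3.1 with h | h <;> subst h <;> constructor <;> simp <;> omega
      rcases List.mem_cons.mp hp with hpq | hpL
      · subst hpq
        have := (ihq q' (List.mem_cons_self)).2
        exact ⟨⟨le_refl _, le_refl _⟩, le_trans hqq'.1 this.1, le_trans hqq'.2 this.2⟩
      · have := ihq p hpL
        exact ⟨⟨le_trans hqq'.1 this.1.1, le_trans hqq'.2 this.1.2⟩, this.2⟩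

lemma mp_len : ∀ (P : List (ℤ × ℤ)) (s t : ℤ × ℤ), MonoPath s t P →
    (P.length : ℤ) = t.1 + t.2 - (s.1 + s.2) + 1 := by
  intro P
  induction P with
  | nil => intro s t h; simp [MonoPath] at h
  | cons q L ih =>
    intro s t h
    obtain ⟨h1, h2, h3⟩ := h
    have hqs : q = s := by simpa using h1
    subst hqs
    cases L with
    | nil =>
      have hqt : q = t := by simpa using h2
      subst hqt; simp
    | cons q' L' =>
      simp only [List.Chain', List.isChain_cons_cons] at h3
      have hmp : MonoPath q' t (q' :: L') :=
        ⟨by simp, by rw [← List.getLast?_cons_cons (a := q)]; exact h2, h3.2⟩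
      have ihq := ih q' t hmp
      have hsum : q'.1 + q'.2 = q.1 + q.2 + 1 := by
        rcases h3.1 with h | h <;> subst h <;> simp <;> ring
      simp only [List.length_cons] at ihq ⊢
      push_cast at ihq ⊢
      omega

lemma mp_start_mem {s t : ℤ × ℤ} {P : List (ℤ × ℤ)} (h : MonoPath s t P) : s ∈ P := by
  cases P with
  | nil => simp [MonoPath] at h
  | cons q L =>
    have : q = s := by simpa using h.1
    subst this; exact List.mem_cons_self

lemma pathset_empty_of {k r a b m n : ℤ} (h : m < a ∨ n < b) :
    PathSet k r (a, b) (m, n) = ∅ := by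
  ext P
  simp only [Set.mem_empty_iff_false, iff_false, PathSet, Set.mem_setOf_eq]
  rintro ⟨hmp, -⟩
  have := (mp_bounds P _ _ hmp (a, b) (mp_start_mem hmp)).2
  simp at this
  omega

lemma pathset_below {k r a b m n : ℤ} (h : b < k * a - r) :
    PathSet k r (a, b) (m, n) = ∅ := by
  ext P
  simp only [Set.mem_empty_iff_false, iff_false, PathSet, Set.mem_setOf_eq]
  rintro ⟨hmp, hln⟩
  have := hln (a, b) (mp_start_mem hmp)
  simp at this
  omega

lemma pathset_diag {k r m n : ℤ} (h : k * m - r ≤ n) :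
    PathSet k r (m, n) (m, n) = {[(m, n)]} := by
  ext P
  simp only [Set.mem_singleton_iff, PathSet, Set.mem_setOf_eq]
  constructor
  · rintro ⟨hmp, -⟩
    have hlen := mp_len P _ _ hmp
    simp only [show ((m,n) : ℤ×ℤ).1 = m from rfl, show ((m,n) : ℤ×ℤ).2 = n from rfl] at hlen
    have : P.length = 1 := by omega
    obtain ⟨x, rfl⟩ := List.length_eq_one_iff.mp this
    have : x = (m, n) := by simpa using hmp.1
    rw [this]
  · rintro rfl
    refine ⟨⟨by simp, by simp, List.isChain_singleton _⟩, ?_⟩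
    intro p hp
    have : p = (m, n) := by simpa using hp
    subst this
    simpa using h

lemma pathset_decomp_sub {k r a b m n : ℤ} (hne : ¬(a = m ∧ b = n)) :
    PathSet k r (a, b) (m, n) ⊆
      (List.cons (a, b)) '' (PathSet k r (a + 1, b) (m, n) ∪ PathSet k r (a, b + 1) (m, n)) := by
  rintro P ⟨⟨h1, h2, h3⟩, h4⟩
  cases P with
  | nil => simp at h1
  | cons q L =>
    have hq : q = (a, b) := by simpa using h1
    subst hq
    cases L with
    | nil =>
      have : (a, b) = ((m, n) : ℤ × ℤ) := by simpa using h2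
      simp only [Prod.mk.injEq] at this
      exact absurd this hne
    | cons q' L' =>
      simp only [List.Chain', List.isChain_cons_cons] at h3
      rw [List.getLast?_cons_cons] at h2
      have hmem : q' :: L' ∈ PathSet k r (a + 1, b) (m, n) ∪ PathSet k r (a, b + 1) (m, n) := by
        rcases h3.1 with h | h
        · left
          refine ⟨⟨by rw [h]; simp, h2, h3.2⟩, fun p hp => h4 p (List.mem_cons_of_mem _ hp)⟩
        · right
          refine ⟨⟨by rw [h]; simp, h2, h3.2⟩, fun p hp => h4 p (List.mem_cons_of_mem _ hp)⟩
      exact ⟨q' :: L', hmem, rfl⟩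

lemma pathset_decomp_sup {k r a b m n : ℤ} (hline : k * a - r ≤ b) :
    (List.cons (a, b)) '' (PathSet k r (a + 1, b) (m, n) ∪ PathSet k r (a, b + 1) (m, n)) ⊆
      PathSet k r (a, b) (m, n) := by
  rintro _ ⟨L, hL, rfl⟩
  have key : ∀ s' : ℤ × ℤ, L ∈ PathSet k r s' (m, n) →
      (s' = (a + 1, b) ∨ s' = (a, b + 1)) → (a, b) :: L ∈ PathSet k r (a, b) (m, n) := by
    rintro s' ⟨⟨g1, g2, g3⟩, g4⟩ hs'
    cases L with
    | nil => simp at g1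
    | cons q L' =>
      have hq : q = s' := by simpa using g1
      subst hq
      refine ⟨⟨by simp, by rw [List.getLast?_cons_cons]; exact g2, ?_⟩, ?_⟩
      · simp only [List.Chain', List.isChain_cons_cons]
        refine ⟨?_, g3⟩
        rcases hs' with h | h <;> rw [h]
        · left; rfl
        · right; rfl
      · intro p hp
        rcases List.mem_cons.mp hp with hp | hp
        · subst hp; simpa using hline
        · exact g4 p hp
  rcases hL with hL | hL
  · exact key _ hL (Or.inl rfl)
  · exact key _ hL (Or.inr rfl)

lemma pathset_finite (k r m n : ℤ) :
    ∀ (N : ℕ) (a b : ℤ), (m + n - a - b).toNat ≤ N → (PathSet k r (a, b) (m, n)).Finite := by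
  intro N
  induction N with
  | zero =>
    intro a b hN
    by_cases h1 : a ≤ m ∧ b ≤ n
    · have : a = m ∧ b = n := by omega
      rw [this.1, this.2]
      by_cases h2 : k * m - r ≤ n
      · rw [pathset_diag h2]; exact Set.finite_singleton _
      · rw [pathset_below (by omega)]; exact Set.finite_empty
    · rw [pathset_empty_of (by omega)]; exact Set.finite_empty
  | succ N ih =>
    intro a b hN
    by_cases h1 : a ≤ m ∧ b ≤ n
    · by_cases h2 : a = m ∧ b = n
      · rw [h2.1, h2.2]
        by_cases h3 : k * m - r ≤ n
        · rw [pathset_diag h3]; exact Set.finite_singleton _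
        · rw [pathset_below (by omega)]; exact Set.finite_empty
      · apply Set.Finite.subset ?_ (pathset_decomp_sub h2)
        apply Set.Finite.image
        exact Set.Finite.union (ih (a + 1) b (by omega)) (ih a (b + 1) (by omega))
    · rw [pathset_empty_of (by omega)]; exact Set.finite_empty

lemma pathset_rec {k r a b m n : ℤ} (hline : k * a - r ≤ b) (hne : ¬(a = m ∧ b = n)) :
    (PathSet k r (a, b) (m, n)).ncard
      = (PathSet k r (a + 1, b) (m, n)).ncard + (PathSet k r (a, b + 1) (m, n)).ncard := by
  have heq : PathSet k r (a, b) (m, n)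
      = (List.cons (a, b)) '' (PathSet k r (a + 1, b) (m, n) ∪ PathSet k r (a, b + 1) (m, n)) :=
    Set.Subset.antisymm (pathset_decomp_sub hne) (pathset_decomp_sup hline)
  rw [heq, Set.ncard_image_of_injective _ (List.cons_injective)]
  apply Set.ncard_union_eq
  · rw [Set.disjoint_left]
    rintro P ⟨⟨g1, -, -⟩, -⟩ ⟨⟨g1', -, -⟩, -⟩
    rw [g1] at g1'
    simp only [Option.some.injEq, Prod.mk.injEq] at g1'
    omega
  · exact pathset_finite k r m n _ (a + 1) b le_rfl
  · exact pathset_finite k r m n _ a (b + 1) le_rfl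

lemma Sc_canon {k : ℤ} (hk : 1 ≤ k) {M : ℕ} {d e : ℤ} (he : 0 ≤ e) {N : ℕ}
    (hN : e.toNat + 1 ≤ N) :
    Sc k M d e ((e / (k + 1)).toNat + 1) = Sc k M d e N := by
  have h1 : 0 ≤ e / (k + 1) := Int.ediv_nonneg he (by omega)
  have h5 : e / (k + 1) ≤ e := Int.ediv_le_self (k + 1) he
  apply Sc_ext hk (by omega) (by omega)
  have h2 := Int.mul_ediv_add_emod e (k + 1)
  have h3 := Int.emod_lt_of_pos e (show (0:ℤ) < k + 1 by omega)
  have h4 := Int.emod_nonneg e (show (k:ℤ) + 1 ≠ 0 by omega)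
  have h6 : ((e / (k + 1)).toNat : ℤ) = e / (k + 1) := Int.toNat_of_nonneg h1
  have h7 : (k + 1) * ((e / (k + 1)) + 1) = (k + 1) * (e / (k + 1)) + (k + 1) := by ring
  push_cast
  rw [h6]
  omega

lemma NW_eq_Sc (k r m n : ℤ) (hk : 1 ≤ k) (hc : k * m - r ≤ n) :
    ∀ (N : ℕ) (a b : ℤ), a ≤ m → b ≤ n → k * a - r ≤ b → (m - a + (n - b)).toNat ≤ N →
      ((PathSet k r (a, b) (m, n)).ncard : ℤ)
        = Sc k (m - a).toNat (n + r + 1 - k * a) (b + r - k * a)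
            (((b + r - k * a) / (k + 1)).toNat + 1) := by
  intro N
  induction N with
  | zero =>
    intro a b ham hbn hline hN
    have hd : a = m ∧ b = n := by omega
    rw [hd.1, hd.2, pathset_diag hc, Set.ncard_singleton, sub_self, Int.toNat_zero,
      Sc_M_zero (by omega)]
    rfl
  | succ N ih =>
    intro a b ham hbn hline hN
    by_cases hdg : a = m ∧ b = n
    · rw [hdg.1, hdg.2, pathset_diag hc, Set.ncard_singleton, sub_self, Int.toNat_zero,
        Sc_M_zero (by omega)]
      rfl
    · rw [pathset_rec hline hdg]
      by_cases haa : a = m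
      · -- vertical: b < n
        rw [pathset_empty_of (Or.inl (by omega)), Set.ncard_empty]
        have ih2 := ih a (b + 1) ham (by omega) (by omega) (by omega)
        rw [show (m - a).toNat = 0 by omega, Sc_M_zero (by omega)] at ih2
        rw [show (m - a).toNat = 0 by omega, Sc_M_zero (by omega)]
        push_cast
        omega
      · -- a < m
        have ham1 : a + 1 ≤ m := by omega
        set e : ℤ := b + r - k * a with hedef
        set d : ℤ := n + r + 1 - k * a with hddef
        have hMZ : ((m - a).toNat : ℤ) = m - a := Int.toNat_of_nonneg (by omega)
        obtain ⟨MM, hMM⟩ : ∃ MM, (m - a).toNat = MM + 1 := ⟨(m - a).toNat - 1, by omega⟩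
        have hMMZ : (MM : ℤ) = m - a - 1 := by omega
        have hka1 : k * (a + 1) = k * a + k := by ring
        have hkma : k * m - k * a = k * (m - a) := by ring
        have hkma1 : k ≤ k * (m - a) := by nlinarith
        have he0 : 0 ≤ e := by omega
        have hM'eq : (m - (a + 1)).toNat = MM := by omega
        have hd'eq : n + r + 1 - k * (a + 1) = d - k := by omega
        have he'eq : b + r - k * (a + 1) = e - k := by omega
        -- d = k * (MM+1) + c with c ≥ 1
        have hdc : d = k * ((MM : ℤ) + 1) + (n + r + 1 - k * m) := by
          rw [hddef, hMMZ]; ring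
        have hc1 : 1 ≤ n + r + 1 - k * m := by omega
        by_cases hbig : k ≤ e
        · -- non-degenerate
          set NN : ℕ := e.toNat + 1 with hNN
          have hrec := Sc_rec_e (k := k) hk (M := MM) (d := d) (e := e) hbig NN
          have hcan_e : Sc k (MM + 1) d e ((e / (k + 1)).toNat + 1)
              = Sc k (MM + 1) d e (NN + 1) := Sc_canon hk he0 (by omega)
          have hcan_ek : Sc k MM (d - k) (e - k) (((e - k) / (k + 1)).toNat + 1)
              = Sc k MM (d - k) (e - k) NN := by
            apply Sc_canon hk (by omega)
            have := Int.toNat_le_toNat (show e - k ≤ e by omega)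
            omega
          by_cases hbn' : b = n
          · -- top row : b = n
            rw [pathset_empty_of (b := b + 1) (Or.inr (by omega)), Set.ncard_empty]
            have ih1 := ih (a + 1) b ham1 hbn (by omega) (by omega)
            rw [hM'eq, hd'eq, he'eq] at ih1
            have hvan : Sc k (MM + 1) d (e + 1) (NN + 1) = 0 := by
              apply Sc_vanish k hk (MM + 1) (n + r + 1 - k * m).toNat 0 d (e + 1) (NN + 1)
                (by omega) ?_ (by push_cast; omega) (by push_cast; omega) ?_
              · rw [Int.toNat_of_nonneg (by omega)]; exact_mod_cast hdc
              · have : (k + 1) * ((NN : ℤ) + 1) = (k + 1) * (NN : ℤ) + k + 1 := by ring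
                have h2 : (e.toNat : ℤ) = e := Int.toNat_of_nonneg he0
                push_cast
                nlinarith [h2]
            rw [hvan] at hrec
            rw [hMM, hcan_e]
            push_cast
            omega
          · -- interior
            have ih1 := ih (a + 1) b ham1 hbn (by omega) (by omega)
            rw [hM'eq, hd'eq, he'eq] at ih1
            have ih2 := ih a (b + 1) (by omega) (by omega) (by omega) (by omega)
            have he1eq : b + 1 + r - k * a = e + 1 := by omega
            rw [he1eq, ← hddef] at ih2
            have hcan_e1 : Sc k (MM + 1) d (e + 1) (((e + 1) / (k + 1)).toNat + 1)
                = Sc k (MM + 1) d (e + 1) (NN + 1) := by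
              apply Sc_canon hk (by omega)
              have := Int.toNat_le_toNat (show e + 1 ≤ e + 1 by omega)
              omega
            rw [hMM] at ih2
            rw [hMM, hcan_e]
            push_cast
            omega
        · -- degenerate : 0 ≤ e < k
          rw [pathset_below (by omega), Set.ncard_empty]
          have ih2 := ih a (b + 1) (by omega) (by omega) (by omega) (by omega)
          have he1eq : b + 1 + r - k * a = e + 1 := by omega
          rw [he1eq, ← hddef] at ih2
          have hdiv1 : e / (k + 1) = 0 := Int.ediv_eq_zero_of_lt he0 (by omega)
          have hdiv2 : (e + 1) / (k + 1) = 0 := Int.ediv_eq_zero_of_lt (by omega) (by omega)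
          have hone : Sc k (m - a).toNat d e 1 = Sc k (m - a).toNat d (e + 1) 1 := by
            rw [Sc, Sc, Finset.sum_range_one, Finset.sum_range_one]
            rw [show e - k * ((0:ℕ):ℤ) = e by push_cast; ring,
              show e + 1 - k * ((0:ℕ):ℤ) = e + 1 by push_cast; ring]
            rw [show (((0:ℕ)):ℤ) = 0 from rfl, IC_zero, IC_zero]
          rw [hdiv2] at ih2
          simp only [Int.toNat_zero, zero_add] at ih2
          rw [hdiv1]
          simp only [Int.toNat_zero, zero_add]
          rw [hone]
          push_cast
          omega


lemma term_helper (k c di Mi Bi : ℤ) (ii : ℕ) (hc : c = di - k * Mi)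
    (hcase : 1 ≤ di ∨ IC Bi (ii : ℤ) = 0) :
    ((((-1 : ℤ)) ^ ii * ((IC (di + Mi - 1) Mi : ℤ) - k * (IC (di + Mi - 1) (Mi - 1) : ℤ))
        * (IC Bi (ii : ℤ) : ℤ) : ℤ) : ℚ)
      = (-1 : ℚ) ^ ii * ((c : ℚ) / (di : ℚ)) * (IC (di + Mi - 1) Mi : ℚ)
          * (IC Bi (ii : ℤ) : ℚ) := by
  rcases hcase with hdi | hB0
  · have hratio : Mi * IC (di + Mi - 1) Mi = di * IC (di + Mi - 1) (Mi - 1) := by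
      rcases lt_trichotomy Mi 0 with h | h | h
      · rw [IC_neg (by omega), IC_neg (by omega)]; ring
      · rw [h]; simp [IC_neg]
      · exact IC_ratio (by omega) hdi
    have hZ : di * ((IC (di + Mi - 1) Mi : ℤ) - k * (IC (di + Mi - 1) (Mi - 1) : ℤ))
        = c * IC (di + Mi - 1) Mi := by
      rw [hc]; linear_combination (k : ℤ) * hratio
    have hZQ : (di : ℚ) * ((IC (di + Mi - 1) Mi : ℚ) - (k : ℚ) * (IC (di + Mi - 1) (Mi - 1) : ℚ))
        = (c : ℚ) * (IC (di + Mi - 1) Mi : ℚ) := by exact_mod_cast hZ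
    have hdQ : (di : ℚ) ≠ 0 := by exact_mod_cast (by omega : di ≠ 0)
    push_cast
    have hc' : (c : ℚ) / di * (IC (di + Mi - 1) Mi : ℚ)
        = (IC (di + Mi - 1) Mi : ℚ) - (k : ℚ) * (IC (di + Mi - 1) (Mi - 1) : ℚ) := by
      rw [div_mul_eq_mul_div, div_eq_iff hdQ]; linear_combination -hZQ
    linear_combination (-(-1 : ℚ) ^ ii * (IC Bi (ii : ℤ) : ℚ)) * hc'
  · rw [hB0]
    push_cast
    ring

theorem stmt6 (k r a b m n : ℤ) (hk : 1 ≤ k) (ha : 0 ≤ a) (ham : a ≤ m)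
    (hn : k * m - r ≤ n) (hb1 : 0 ≤ b) (hb2 : k * a - r ≤ b) (hbn : b ≤ n) :
    (NW k r a b m n : ℚ) =
      ∑ i ∈ Finset.range (((b + r - k * a) / (k + 1)).toNat + 1),
        (-1 : ℚ) ^ i * (((n + r + 1 - k * m : ℤ) : ℚ) / ((n + r + 1 - k * (a + (i : ℤ)) : ℤ) : ℚ)) *
          (IC (m + n + r - (k + 1) * (a + (i : ℤ))) (m - a - (i : ℤ)) : ℚ) *
          (IC (b + r - k * (a + (i : ℤ))) (i : ℤ) : ℚ) := by
  have key := NW_eq_Sc k r m n hk hn ((m - a + (n - b)).toNat) a b ham hbn hb2 le_rfl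
  have hNW : NW k r a b m n = (PathSet k r (a, b) (m, n)).ncard := rfl
  have keyQ : ((NW k r a b m n : ℕ) : ℚ)
      = ((Sc k (m - a).toNat (n + r + 1 - k * a) (b + r - k * a)
          (((b + r - k * a) / (k + 1)).toNat + 1) : ℤ) : ℚ) := by
    rw [hNW]; exact_mod_cast key
  rw [keyQ, Sc, Int.cast_sum]
  apply Finset.sum_congr rfl
  intro i _
  have hMZ : (((m - a).toNat : ℕ) : ℤ) = m - a := Int.toNat_of_nonneg (by omega)
  have e1 : m + n + r - (k + 1) * (a + (i : ℤ))
      = (n + r + 1 - k * (a + (i : ℤ))) + (m - a - (i : ℤ)) - 1 := by ring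
  rw [e1]
  simp only [Tc]
  have e2 : n + r + 1 - k * a + ((m - a).toNat : ℤ) - 1 - (k + 1) * (i : ℤ)
      = (n + r + 1 - k * (a + (i : ℤ))) + (m - a - (i : ℤ)) - 1 := by rw [hMZ]; ring
  have e3 : ((m - a).toNat : ℤ) - (i : ℤ) = m - a - (i : ℤ) := by omega
  have e4 : ((m - a).toNat : ℤ) - (i : ℤ) - 1 = m - a - (i : ℤ) - 1 := by omega
  have e5 : b + r - k * a - k * (i : ℤ) = b + r - k * (a + (i : ℤ)) := by ring
  rw [e2, e3, e5]
  apply term_helper k _ _ _ _ i (by ring)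
  -- the case hypothesis
  have hsplit : k * (a + (i : ℤ)) = k * a + k * (i : ℤ) := by ring
  by_cases hdi : 1 ≤ n + r + 1 - k * (a + (i : ℤ))
  · exact Or.inl hdi
  · right
    have hki : (0 : ℤ) ≤ k * (i : ℤ) := by positivity
    have hi1 : 1 ≤ i := by
      rcases Nat.eq_zero_or_pos i with h | h
      · exfalso; subst h; norm_num at hdi hsplit; omega
      · omega
    apply IC_eq_zero_of_lt
    · have : (1 : ℤ) ≤ (i : ℤ) := by exact_mod_cast hi1
      omega
    · exact_mod_cast hi1
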